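/- arXiv:2208.06944 — 8 statements merged into one kernel-verified Lean document; each statement's English description precedes it below -/
import Mathlib

section
/- For an irrational α ∈ (0,1), the frequency resonance exponent β(α) := limsup_{|k|→∞} (−ln ‖kα‖_{ℝ/ℤ})/|k| equals limsup_{n→∞} (ln q_{n+1})/q_n, where q_n are the continued fraction denominators of α. -/
noncomputable def normZ (x : ℝ) : ℝ := |x - round x|
noncomputable def cfGauss (x : ℝ) : ℝ := Int.fract x⁻¹
noncomputable def cfA (α : ℝ) (n : ℕ) : ℤ := ⌊(cfGauss^[n] α)⁻¹⌋
noncomputable def cfQ (α : ℝ) : ℕ → ℤ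
  | 0 => 1
  | 1 => cfA α 0
  | (n + 2) => cfA α (n + 1) * cfQ α (n + 1) + cfQ α n
noncomputable def cfP (α : ℝ) : ℕ → ℤ
  | 0 => 0
  | 1 => 1
  | (n + 2) => cfA α (n + 1) * cfP α (n + 1) + cfP α n

section core
variable {α : ℝ} (hα : Irrational α) (h0 : 0 < α) (h1 : α < 1)
include hα h0 h1

/-- error terms -/
noncomputable def cfE (α : ℝ) (n : ℕ) : ℝ := (cfQ α n : ℝ) * α - (cfP α n : ℝ)

lemma iter_prop : ∀ n, Irrational (cfGauss^[n] α) ∧ 0 < cfGauss^[n] α ∧ cfGauss^[n] α < 1 := by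
  intro n
  induction n with
  | zero => exact ⟨hα, h0, h1⟩
  | succ n ih =>
    obtain ⟨hirr, hpos, hlt⟩ := ih
    rw [Function.iterate_succ_apply']
    set y := cfGauss^[n] α
    have hinv : Irrational y⁻¹ := hirr.inv
    have hfr : Irrational (Int.fract y⁻¹) := by
      unfold Int.fract; exact hinv.sub_intCast _
    refine ⟨hfr, ?_, Int.fract_lt_one _⟩
    rcases lt_or_eq_of_le (Int.fract_nonneg y⁻¹) with h | h
    · exact h
    · exact absurd h.symm (by simpa using hfr.ne_int 0)

lemma cfA_ge_one : ∀ n, 1 ≤ cfA α n := by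
  intro n
  obtain ⟨hirr, hpos, hlt⟩ := iter_prop hα h0 h1 n
  have : 1 < (cfGauss^[n] α)⁻¹ := (one_lt_inv₀ hpos).2 hlt
  exact Int.le_floor.2 (by exact_mod_cast this.le)

lemma cfQ_ge_one : ∀ n, 1 ≤ cfQ α n := by
  have key : ∀ n, 1 ≤ cfQ α n ∧ 1 ≤ cfQ α (n+1) := by
    intro n
    induction n with
    | zero => exact ⟨le_refl 1, by simpa [cfQ] using cfA_ge_one hα h0 h1 0⟩
    | succ n ih =>
      refine ⟨ih.2, ?_⟩
      show 1 ≤ cfA α (n+1) * cfQ α (n+1) + cfQ α n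
      nlinarith [cfA_ge_one hα h0 h1 (n+1), ih.1, ih.2]
  exact fun n => (key n).1

lemma cfQ_mono : ∀ n, cfQ α n ≤ cfQ α (n+1) := by
  intro n
  rcases n with _ | n
  · simpa [cfQ] using cfA_ge_one hα h0 h1 0
  ·
    show cfQ α (n+1) ≤ cfA α (n+1) * cfQ α (n+1) + cfQ α n
    nlinarith [cfA_ge_one hα h0 h1 (n+1), cfQ_ge_one hα h0 h1 n, cfQ_ge_one hα h0 h1 (n+1)]

lemma cfQ_ge_n : ∀ n : ℕ, (n : ℤ) ≤ cfQ α n := by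
  have key : ∀ n : ℕ, (n:ℤ) ≤ cfQ α n ∧ ((n:ℤ)+1) ≤ cfQ α (n+1) := by
    intro n
    induction n with
    | zero => exact ⟨by simp [cfQ], by simpa [cfQ] using cfA_ge_one hα h0 h1 0⟩
    | succ n ih =>
      refine ⟨by exact_mod_cast ih.2, ?_⟩
      show ((n:ℤ)+1+1) ≤ cfA α (n+1) * cfQ α (n+1) + cfQ α n
      nlinarith [cfA_ge_one hα h0 h1 (n+1), cfQ_ge_one hα h0 h1 n, ih.2]
  exact fun n => (key n).1

lemma cfE_rec : ∀ n, cfE α (n+1) = -(cfGauss^[n+1] α) * cfE α n := by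
  intro n
  induction n with
  | zero =>
    have hne : α ≠ 0 := ne_of_gt h0
    show cfE α 1 = -(cfGauss^[1] α) * cfE α 0
    have h1' : cfGauss^[1] α = α⁻¹ - (cfA α 0 : ℝ) := by
      show cfGauss α = _
      rw [cfGauss, Int.fract]
      norm_num [cfA]
    rw [h1']
    simp only [cfE, show cfQ α 1 = cfA α 0 from rfl, show cfP α 1 = (1:ℤ) from rfl,
      show cfQ α 0 = (1:ℤ) from rfl, show cfP α 0 = (0:ℤ) from rfl]
    push_cast
    field_simp
    ring
  | succ n ih =>
    have hprop := iter_prop hα h0 h1 (n+1)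
    have hne : cfGauss^[n+1] α ≠ 0 := ne_of_gt hprop.2.1
    have h2' : cfGauss^[n+2] α = (cfGauss^[n+1] α)⁻¹ - (cfA α (n+1) : ℝ) := by
      rw [show n+2 = (n+1)+1 from rfl, Function.iterate_succ_apply']
      rw [cfGauss, Int.fract]
      norm_num [cfA]
    have hE2 : cfE α (n+2) = (cfA α (n+1) : ℝ) * cfE α (n+1) + cfE α n := by
      unfold cfE
      show ((cfA α (n+1) * cfQ α (n+1) + cfQ α n : ℤ) : ℝ) * α - ((cfA α (n+1) * cfP α (n+1) + cfP α n : ℤ) : ℝ) = _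
      push_cast; ring
    have hx1 : (cfGauss^[n+1] α)⁻¹ * (cfGauss^[n+1] α) = 1 := inv_mul_cancel₀ hne
    rw [hE2, h2', ih]
    linear_combination (-(cfE α n)) * hx1

lemma cfE_ne_zero : ∀ n, cfE α n ≠ 0 := by
  intro n
  induction n with
  | zero => simpa [cfE, cfQ, cfP] using ne_of_gt h0
  | succ n ih =>
    rw [cfE_rec hα h0 h1 n]
    have := (iter_prop hα h0 h1 (n+1)).2.1
    exact mul_ne_zero (by linarith) ih

lemma cfE_sign : ∀ n, cfE α n * cfE α (n+1) < 0 := by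
  intro n
  rw [cfE_rec hα h0 h1 n]
  have hx := (iter_prop hα h0 h1 (n+1)).2.1
  have hne := cfE_ne_zero hα h0 h1 n
  nlinarith [mul_self_pos.2 hne]

omit hα h0 h1 in
lemma cfdet : ∀ n, cfQ α (n+1) * cfP α n - cfQ α n * cfP α (n+1) = (-1)^(n+1) := by
  intro n
  induction n with
  | zero => simp [cfQ, cfP]
  | succ n ih =>
    have e1 : cfQ α (n+2) = cfA α (n+1) * cfQ α (n+1) + cfQ α n := rfl
    have e2 : cfP α (n+2) = cfA α (n+1) * cfP α (n+1) + cfP α n := rfl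
    rw [show n+1+1 = n+2 from rfl, e1, e2]
    linear_combination (-1 : ℤ) * ih

omit hα h0 h1 in
lemma cfQE : ∀ n, (cfQ α (n+1) : ℝ) * cfE α n - (cfQ α n : ℝ) * cfE α (n+1) = (-1)^n := by
  intro n
  have h := cfdet (α := α) n
  have h' : ((cfQ α (n+1) * cfP α n - cfQ α n * cfP α (n+1) : ℤ) : ℝ) = ((-1)^(n+1) : ℤ) := by
    exact_mod_cast congrArg (Int.cast : ℤ → ℝ) h
  push_cast at h'
  simp only [cfE]
  linear_combination (-1 : ℝ) * h'

lemma cfE_abs_rec : ∀ n, |cfE α (n+1)| = (cfGauss^[n+1] α) * |cfE α n| := by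
  intro n
  rw [cfE_rec hα h0 h1 n, abs_mul, abs_neg,
    abs_of_pos (iter_prop hα h0 h1 (n+1)).2.1]

lemma cfE_abs_lt : ∀ n, |cfE α (n+1)| < |cfE α n| := by
  intro n
  rw [cfE_abs_rec hα h0 h1 n]
  have h := iter_prop hα h0 h1 (n+1)
  have hpos : 0 < |cfE α n| := abs_pos.2 (cfE_ne_zero hα h0 h1 n)
  nlinarith [h.2.1, h.2.2]

lemma cfQposR : ∀ n, (0:ℝ) < (cfQ α n : ℝ) := by
  intro n
  exact_mod_cast lt_of_lt_of_le zero_lt_one (by exact_mod_cast cfQ_ge_one hα h0 h1 n)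

lemma habs : ∀ n, (cfQ α (n+1) : ℝ) * |cfE α n| + (cfQ α n : ℝ) * |cfE α (n+1)| = 1 := by
  intro n
  have hkey := cfQE (α := α) n
  have hsign := cfE_sign hα h0 h1 n
  have hq1 : (0:ℝ) < (cfQ α (n+1) : ℝ) := cfQposR hα h0 h1 (n+1)
  have hq0 : (0:ℝ) < (cfQ α n : ℝ) := cfQposR hα h0 h1 n
  rcases lt_trichotomy (cfE α n) 0 with hn | hn | hn
  · have hp : 0 < cfE α (n+1) := by nlinarith
    rw [abs_of_neg hn, abs_of_pos hp]
    rcases Nat.even_or_odd n with he | he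
    · exfalso
      rw [he.neg_one_pow] at hkey
      nlinarith
    · rw [he.neg_one_pow] at hkey
      nlinarith
  · exact absurd hn (cfE_ne_zero hα h0 h1 n)
  · have hp : cfE α (n+1) < 0 := by nlinarith
    rw [abs_of_pos hn, abs_of_neg hp]
    rcases Nat.even_or_odd n with he | he
    · rw [he.neg_one_pow] at hkey
      nlinarith
    · exfalso
      rw [he.neg_one_pow] at hkey
      nlinarith

lemma cfE_lt : ∀ n, |cfE α n| < 1 / (cfQ α (n+1) : ℝ) := by
  intro n
  have h := habs hα h0 h1 n
  have hq1 : (0:ℝ) < (cfQ α (n+1) : ℝ) := cfQposR hα h0 h1 (n+1)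
  have hq0 : (0:ℝ) < (cfQ α n : ℝ) := cfQposR hα h0 h1 n
  have he : 0 < |cfE α (n+1)| := abs_pos.2 (cfE_ne_zero hα h0 h1 (n+1))
  rw [lt_div_iff₀ hq1]
  nlinarith

lemma cfE_ge : ∀ n, 1 / (2 * (cfQ α (n+1) : ℝ)) ≤ |cfE α n| := by
  intro n
  have h := habs hα h0 h1 n
  have hq1 : (0:ℝ) < (cfQ α (n+1) : ℝ) := cfQposR hα h0 h1 (n+1)
  have hmono : (cfQ α n : ℝ) ≤ (cfQ α (n+1) : ℝ) := by exact_mod_cast cfQ_mono hα h0 h1 n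
  have hlt := cfE_abs_lt hα h0 h1 n
  have he : 0 ≤ |cfE α (n+1)| := abs_nonneg _
  rw [div_le_iff₀ (by positivity)]
  nlinarith

lemma cfQ_two_le : ∀ n, 2 ≤ cfQ α (n+2) := by
  intro n
  have h1' := cfQ_ge_one hα h0 h1 n
  have h2 := cfQ_ge_one hα h0 h1 (n+1)
  have h3 := cfA_ge_one hα h0 h1 (n+1)
  show 2 ≤ cfA α (n+1) * cfQ α (n+1) + cfQ α n
  nlinarith

lemma normZ_cfQ : ∀ n, 1 ≤ n → normZ ((cfQ α n : ℝ) * α) = |cfE α n| := by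
  intro n hn
  have hhalf : |cfE α n| < 1/2 := by
    have h2 : (2:ℝ) ≤ (cfQ α (n+1) : ℝ) := by
      obtain ⟨m, rfl⟩ := Nat.exists_eq_add_of_le' hn
      exact_mod_cast cfQ_two_le hα h0 h1 m
    calc |cfE α n| < 1 / (cfQ α (n+1) : ℝ) := cfE_lt hα h0 h1 n
    _ ≤ 1/2 := by
      apply div_le_div_of_nonneg_left one_pos.le two_pos h2 |>.trans_eq rfl
  have hround : round ((cfQ α n : ℝ) * α) = cfP α n := by
    have : (cfQ α n : ℝ) * α = cfE α n + (cfP α n : ℝ) := by unfold cfE; ring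
    rw [this, show ((cfP α n : ℝ)) = ((cfP α n : ℤ) : ℝ) from rfl, round_add_intCast]
    have : round (cfE α n) = 0 := by
      rw [round_eq_zero_iff]
      constructor
      · cases abs_lt.1 hhalf; linarith
      · cases abs_lt.1 hhalf; linarith
    rw [this, zero_add]
  unfold normZ
  rw [hround]
  unfold cfE
  rfl

omit hα h0 h1 in
lemma abs_add_ge (a b : ℝ) (h : 0 ≤ a * b) : |b| ≤ |a + b| :=
  sq_le_sq.1 (by nlinarith)

lemma best_approx : ∀ (n : ℕ) (k p' : ℤ), k ≠ 0 → |k| < cfQ α (n+1) →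
    |cfE α n| ≤ |(k:ℝ) * α - (p' : ℝ)| := by
  intro n k p' hk hklt
  set s : ℤ := cfQ α (n+1) * cfP α n - cfQ α n * cfP α (n+1) with hs_def
  have hss : s * s = 1 := by
    rw [hs_def, cfdet (α := α) n]
    rcases Nat.even_or_odd (n+1) with he | he
    · rw [he.neg_one_pow]; ring
    · rw [he.neg_one_pow]; ring
  set x : ℤ := s * (cfP α n * k - cfQ α n * p') with hx_def
  set y : ℤ := s * (cfQ α (n+1) * p' - cfP α (n+1) * k) with hy_def
  have hk_eq : x * cfQ α (n+1) + y * cfQ α n = k := by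
    rw [hx_def, hy_def, hs_def]
    linear_combination k * hss - (k * s) * hs_def + (k * s) * hs_def
  have hp_eq : x * cfP α (n+1) + y * cfP α n = p' := by
    rw [hx_def, hy_def]
    linear_combination p' * hss
  have hk' : ((x:ℝ) * (cfQ α (n+1) : ℝ) + (y:ℝ) * (cfQ α n : ℝ)) = (k:ℝ) := by
    exact_mod_cast congrArg (Int.cast : ℤ → ℝ) hk_eq
  have hp'' : ((x:ℝ) * (cfP α (n+1) : ℝ) + (y:ℝ) * (cfP α n : ℝ)) = (p':ℝ) := by
    exact_mod_cast congrArg (Int.cast : ℤ → ℝ) hp_eq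
  have hEq : (k:ℝ) * α - (p':ℝ) = (x:ℝ) * cfE α (n+1) + (y:ℝ) * cfE α n := by
    simp only [cfE]
    linear_combination hp'' - α * hk'
  rw [hEq]
  have hq1 : 1 ≤ cfQ α (n+1) := cfQ_ge_one hα h0 h1 (n+1)
  have hq0 : 1 ≤ cfQ α n := cfQ_ge_one hα h0 h1 n
  by_cases hy : y = 0
  · exfalso
    have hx0 : x ≠ 0 := by
      intro h
      apply hk
      rw [← hk_eq, h, hy]; ring
    have h1x : 1 ≤ |x| := Int.one_le_abs hx0
    have : cfQ α (n+1) ≤ |k| := by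
      rw [← hk_eq, hy]
      have : |x * cfQ α (n+1) + 0 * cfQ α n| = |x| * |cfQ α (n+1)| := by
        rw [zero_mul, add_zero, abs_mul]
      rw [this, abs_of_pos (show (0:ℤ) < cfQ α (n+1) by linarith)]
      nlinarith
    omega
  · have h1y : (1:ℝ) ≤ |(y:ℝ)| := by
      rw [← Int.cast_abs]
      exact_mod_cast Int.one_le_abs hy
    by_cases hx : x = 0
    · rw [hx]
      push_cast
      rw [zero_mul, zero_add, abs_mul]
      nlinarith [abs_nonneg (cfE α n)]
    · have hxy : x * y < 0 := by
        rcases lt_trichotomy (x*y) 0 with h | h | h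
        · exact h
        · exact absurd (mul_eq_zero.1 h) (by tauto)
        · exfalso
          have hk_abs : k ≤ |k| := le_abs_self k
          have hk_abs' : -|k| ≤ k := neg_abs_le k
          rcases lt_trichotomy x 0 with hxs | hxs | hxs
          · have hys : y < 0 := by nlinarith
            nlinarith [hk_eq]
          · exact hx hxs
          · have hys : 0 < y := by nlinarith
            nlinarith [hk_eq]
      have hsame : 0 ≤ ((x:ℝ) * cfE α (n+1)) * ((y:ℝ) * cfE α n) := by
        have hxy' : ((x:ℝ) * (y:ℝ)) < 0 := by exact_mod_cast hxy
        have h2 := cfE_sign hα h0 h1 n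
        nlinarith
      calc |cfE α n| ≤ |(y:ℝ) * cfE α n| := by
            rw [abs_mul]; nlinarith [abs_nonneg (cfE α n)]
      _ ≤ |(x:ℝ) * cfE α (n+1) + (y:ℝ) * cfE α n| := abs_add_ge _ _ hsame

lemma normZ_lower : ∀ (n : ℕ) (k : ℤ), k ≠ 0 → |k| < cfQ α (n+1) →
    1 / (2 * (cfQ α (n+1) : ℝ)) ≤ normZ ((k:ℝ) * α) := by
  intro n k hk hklt
  refine le_trans (cfE_ge hα h0 h1 n) ?_
  exact best_approx hα h0 h1 n k (round ((k:ℝ)*α)) hk hklt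

end core

section main
variable {α : ℝ} (hα : Irrational α) (h0 : 0 < α) (h1 : α < 1)
include hα h0 h1

lemma cfQ_monotone : Monotone (cfQ α) := monotone_nat_of_le_succ (cfQ_mono hα h0 h1)

theorem stmt2' :
    Filter.limsup
        (fun k : ℤ => ((-Real.log (normZ ((k : ℝ) * α)) / |(k : ℝ)| : ℝ) : EReal))
        Filter.cofinite
      = Filter.limsup
        (fun n : ℕ => ((Real.log (cfQ α (n + 1)) / (cfQ α n : ℝ) : ℝ) : EReal))
        Filter.atTop := by
  set F : ℤ → EReal := fun k => ((-Real.log (normZ ((k : ℝ) * α)) / |(k : ℝ)| : ℝ) : EReal)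
    with hF
  set G : ℕ → EReal := fun n => ((Real.log (cfQ α (n + 1)) / (cfQ α n : ℝ) : ℝ) : EReal)
    with hG
  have hqposR : ∀ n, (0:ℝ) < (cfQ α n : ℝ) := cfQposR hα h0 h1
  have hq1R : ∀ n, (1:ℝ) ≤ (cfQ α n : ℝ) := fun n => by
    exact_mod_cast cfQ_ge_one hα h0 h1 n
  have hGnonneg : ∀ n, (0:EReal) ≤ G n := fun n => by
    rw [hG]
    refine EReal.coe_nonneg.2 ?_
    have : (0:ℝ) ≤ Real.log (cfQ α (n+1)) := Real.log_nonneg (hq1R (n+1))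
    exact div_nonneg this (hqposR n).le
  have hL0 : (0:EReal) ≤ Filter.limsup G Filter.atTop :=
    Filter.le_limsup_of_frequently_le (Filter.Frequently.of_forall hGnonneg)
  apply le_antisymm
  · -- upper bound
    refine le_of_forall_gt_imp_ge_of_dense fun e he => ?_
    obtain ⟨c, hc1, hc2⟩ := EReal.exists_between_coe_real he
    -- pick b with L < b < c
    obtain ⟨b, hb1, hb2⟩ := EReal.exists_between_coe_real hc1
    have hbc : b < c := EReal.coe_lt_coe_iff.1 hb2
    have hbpos : 0 < b := by
      have := lt_of_le_of_lt hL0 hb1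
      exact_mod_cast this
    have hev := Filter.eventually_lt_of_limsup_lt hb1
    obtain ⟨N, hN⟩ := Filter.eventually_atTop.1 hev
    -- pick m ≥ N with log 2 / q_m < c - b
    have hcb : (0:ℝ) < c - b := by linarith
    obtain ⟨M, hM⟩ := exists_nat_gt (Real.log 2 / (c - b))
    set m : ℕ := max N M
    have hmN : N ≤ m := le_max_left _ _
    have hqm : Real.log 2 / (cfQ α m : ℝ) < c - b := by
      have hm2 : (M:ℝ) ≤ (cfQ α m : ℝ) := by
        have : (M:ℤ) ≤ (m:ℤ) := by exact_mod_cast le_max_right N M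
        have := le_trans this (cfQ_ge_n hα h0 h1 m)
        exact_mod_cast this
      have h1' : Real.log 2 < (M:ℝ) * (c - b) := (div_lt_iff₀ hcb).1 hM
      rw [div_lt_iff₀ (hqposR m)]
      nlinarith
    suffices hsuf : ∀ᶠ k in (Filter.cofinite : Filter ℤ), F k ≤ (c : EReal) by
      exact le_trans (Filter.limsup_le_of_le (by isBoundedDefault) hsuf) hc2.le
    -- the eventual bound
    have hfin : ∀ᶠ k in (Filter.cofinite : Filter ℤ), cfQ α m ≤ |k| := by
      rw [Filter.eventually_cofinite]
      refine Set.Finite.subset (Set.finite_Icc (-(cfQ α m)) (cfQ α m)) ?_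
      intro k hk
      simp only [Set.mem_setOf_eq, not_le] at hk
      simp only [Set.mem_Icc]
      have h1' := neg_abs_le k
      have h2' := le_abs_self k
      omega
    refine hfin.mono fun k hk => ?_
    -- main estimate
    have hqm1 : (1:ℤ) ≤ cfQ α m := cfQ_ge_one hα h0 h1 m
    have hk0 : k ≠ 0 := by
      intro h; rw [h] at hk; simp at hk; omega
    have hbound : ∀ j : ℕ, cfQ α j ≤ |k| → j ≤ (|k|).toNat := by
      intro j hj
      have := le_trans (cfQ_ge_n hα h0 h1 j) hj
      omega
    set n : ℕ := Nat.findGreatest (fun j => cfQ α j ≤ |k|) (|k|).toNat with hn_def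
    have hmn : m ≤ n := Nat.le_findGreatest (P := fun j => cfQ α j ≤ |k|) (hbound m hk) hk
    have hn_spec : cfQ α n ≤ |k| := by
      rw [hn_def]; exact Nat.findGreatest_spec (P := fun j => cfQ α j ≤ |k|) (hbound m hk) hk
    have hn_succ : |k| < cfQ α (n+1) := by
      by_contra h
      push_neg at h
      have hgt : Nat.findGreatest (fun j => cfQ α j ≤ |k|) (|k|).toNat < n+1 := by
        rw [← hn_def]; exact Nat.lt_succ_self n
      exact Nat.findGreatest_is_greatest hgt (hbound _ h) h
    have hnN : N ≤ n := le_trans hmN hmn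
    have hGn : Real.log (cfQ α (n+1)) / (cfQ α n : ℝ) < b := by
      have := hN n hnN
      rw [hG] at this
      exact EReal.coe_lt_coe_iff.1 this
    have hnorm := normZ_lower hα h0 h1 n k hk0 hn_succ
    have hq1pos : (0:ℝ) < 2 * (cfQ α (n+1) : ℝ) := by
      have := hqposR (n+1); linarith
    have hnormpos : 0 < normZ ((k:ℝ) * α) :=
      lt_of_lt_of_le (div_pos one_pos hq1pos) hnorm
    have hlog : -Real.log (normZ ((k:ℝ) * α)) ≤ Real.log 2 + Real.log (cfQ α (n+1)) := by
      have h2 : Real.log (1 / (2 * (cfQ α (n+1) : ℝ))) ≤ Real.log (normZ ((k:ℝ) * α)) :=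
        Real.log_le_log (div_pos one_pos hq1pos) hnorm
      rw [Real.log_div one_ne_zero (ne_of_gt hq1pos), Real.log_one,
        Real.log_mul two_ne_zero (ne_of_gt (hqposR (n+1)))] at h2
      linarith
    have hkabs : (cfQ α n : ℝ) ≤ |(k:ℝ)| := by
      rw [show |(k:ℝ)| = ((|k| : ℤ) : ℝ) by push_cast [Int.cast_abs]; rfl]
      exact_mod_cast hn_spec
    have hkpos : (0:ℝ) < |(k:ℝ)| := lt_of_lt_of_le (hqposR n) hkabs
    rw [hF]
    refine EReal.coe_le_coe_iff.2 ?_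
    rcases le_or_gt (-Real.log (normZ ((k:ℝ) * α))) 0 with hneg | hpos
    · have : -Real.log (normZ ((k:ℝ) * α)) / |(k:ℝ)| ≤ 0 := div_nonpos_iff.2 (Or.inr ⟨hneg, hkpos.le⟩)
      linarith
    · have hqmono : (cfQ α m : ℝ) ≤ (cfQ α n : ℝ) := by
        exact_mod_cast cfQ_monotone hα h0 h1 hmn
      have hlog2 : (0:ℝ) ≤ Real.log 2 := Real.log_nonneg one_le_two
      calc -Real.log (normZ ((k:ℝ) * α)) / |(k:ℝ)|
          ≤ (Real.log 2 + Real.log (cfQ α (n+1))) / |(k:ℝ)| := by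
            gcongr
      _ ≤ (Real.log 2 + Real.log (cfQ α (n+1))) / (cfQ α n : ℝ) := by
            have hnum : (0:ℝ) ≤ Real.log 2 + Real.log (cfQ α (n+1)) := by
              have := Real.log_nonneg (hq1R (n+1)); linarith
            gcongr
            exact hqposR n
      _ = Real.log 2 / (cfQ α n : ℝ) + Real.log (cfQ α (n+1)) / (cfQ α n : ℝ) := by ring
      _ ≤ Real.log 2 / (cfQ α m : ℝ) + Real.log (cfQ α (n+1)) / (cfQ α n : ℝ) := by
            have := hqposR m
            gcongr <;> assumption
      _ ≤ Real.log 2 / (cfQ α m : ℝ) + b := by linarith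
      _ ≤ c := by linarith
  · -- lower bound
    have hq_tendsto : Filter.Tendsto (fun n : ℕ => cfQ α n) Filter.atTop
        (Filter.cofinite : Filter ℤ) := by
      have h1' : Filter.Tendsto (fun n : ℕ => cfQ α n) Filter.atTop Filter.atTop :=
        Filter.tendsto_atTop_mono (cfQ_ge_n hα h0 h1) tendsto_natCast_atTop_atTop
      exact h1'.mono_right (Int.cofinite_eq ▸ le_sup_right)
    calc Filter.limsup G Filter.atTop
        ≤ Filter.limsup (F ∘ fun n : ℕ => cfQ α n) Filter.atTop := by
          refine Filter.limsup_le_limsup (Filter.eventually_atTop.2 ⟨1, fun n hn => ?_⟩)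
          rw [hG, hF]
          simp only [Function.comp_apply]
          refine EReal.coe_le_coe_iff.2 ?_
          have hnz := normZ_cfQ hα h0 h1 n hn
          have hEpos : 0 < |cfE α n| := abs_pos.2 (cfE_ne_zero hα h0 h1 n)
          have hElt := cfE_lt hα h0 h1 n
          have hlog : Real.log (normZ ((cfQ α n : ℝ) * α)) ≤ -Real.log (cfQ α (n+1)) := by
            rw [hnz]
            have := Real.log_le_log hEpos hElt.le
            rwa [Real.log_div one_ne_zero (ne_of_gt (hqposR (n+1))), Real.log_one,
              zero_sub] at this
          have habsq : |((cfQ α n : ℤ) : ℝ)| = (cfQ α n : ℝ) := abs_of_pos (hqposR n)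
          rw [habsq]
          gcongr
          · exact (hqposR n).le
          · linarith
      _ = Filter.limsup F (Filter.map (fun n : ℕ => cfQ α n) Filter.atTop) := by
          rw [Filter.limsup, Filter.limsup, Filter.map_map]
      _ ≤ Filter.limsup F Filter.cofinite :=
          Filter.limsup_le_limsup_of_le hq_tendsto

end main

/-- β(α) = limsup ln q_{n+1} / q_n. -/
theorem stmt2 (α : ℝ) (hα : Irrational α) (h0 : 0 < α) (h1 : α < 1) :
    Filter.limsup
        (fun k : ℤ => ((-Real.log (normZ ((k : ℝ) * α)) / |(k : ℝ)| : ℝ) : EReal))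
        Filter.cofinite
      = Filter.limsup
        (fun n : ℕ => ((Real.log (cfQ α (n + 1)) / (cfQ α n : ℝ) : ℝ) : EReal))
        Filter.atTop := stmt2' hα h0 h1
end

section
/- Let α ∈ (0,1) be irrational with continued fraction denominators q_n. If k = l₁ q_n + l₂ with integers l₁, l₂ satisfying |l₁| ≤ q_{n+1}/(10 q_n) and 1 ≤ l₂ < q_n, then ‖kα‖_{ℝ/ℤ} ≥ 1/(4 q_n). -/
lemma normZ_le_abs_sub_int (x : ℝ) (m : ℤ) : normZ x ≤ |x - m| := by
  unfold normZ
  rw [abs_sub_round_eq_min]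
  have hf : Int.fract x = x - ⌊x⌋ := rfl
  rcases le_or_gt m ⌊x⌋ with hm | hm
  · have hm' : (m : ℝ) ≤ ⌊x⌋ := by exact_mod_cast hm
    have h1 : Int.fract x ≤ x - m := by rw [hf]; linarith
    calc min (Int.fract x) (1 - Int.fract x) ≤ Int.fract x := min_le_left _ _
      _ ≤ |x - m| := h1.trans (le_abs_self _)
  · have hm' : (⌊x⌋ : ℝ) + 1 ≤ m := by exact_mod_cast hm
    have h1 : 1 - Int.fract x ≤ (m : ℝ) - x := by
      rw [hf]; have := Int.lt_floor_add_one x; linarith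
    calc min (Int.fract x) (1 - Int.fract x) ≤ 1 - Int.fract x := min_le_right _ _
      _ ≤ |x - m| := by rw [abs_sub_comm]; exact h1.trans (le_abs_self _)

lemma normZ_nonneg (x : ℝ) : 0 ≤ normZ x := abs_nonneg _

lemma normZ_add_le (x y : ℝ) : normZ (x + y) ≤ normZ x + normZ y := by
  calc normZ (x + y) ≤ |x + y - ((round x + round y : ℤ) : ℝ)| :=
        normZ_le_abs_sub_int _ _
    _ = |(x - round x) + (y - round y)| := by push_cast; ring_nf
    _ ≤ _ := abs_add_le _ _

lemma normZ_int_mul (m : ℤ) (x : ℝ) : normZ ((m : ℝ) * x) ≤ |(m : ℝ)| * normZ x := by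
  calc normZ ((m : ℝ) * x) ≤ |(m : ℝ) * x - ((m * round x : ℤ) : ℝ)| :=
        normZ_le_abs_sub_int _ _
    _ = |(m : ℝ)| * normZ x := by
        unfold normZ; rw [← abs_mul]; push_cast; ring_nf

/-- small divisor estimate (5) of the Proposition. -/
theorem stmt3 (α : ℝ) (hα : Irrational α) (h0 : 0 < α) (h1 : α < 1) (n : ℕ)
    (hq : 2 ≤ cfQ α (n + 1))
    (hup : normZ ((cfQ α n : ℝ) * α) ≤ 1 / (cfQ α (n + 1) : ℝ))
    (hlow : ∀ l : ℤ, 1 ≤ l → l < cfQ α n →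
      1 / (2 * (cfQ α n : ℝ)) ≤ normZ ((l : ℝ) * α))
    (k l₁ l₂ : ℤ) (hk : k = l₁ * cfQ α n + l₂)
    (hl₁ : |(l₁ : ℝ)| ≤ (cfQ α (n + 1) : ℝ) / (10 * (cfQ α n : ℝ)))
    (hl₂1 : 1 ≤ l₂) (hl₂2 : l₂ < cfQ α n) :
    1 / (4 * (cfQ α n : ℝ)) ≤ normZ ((k : ℝ) * α) := by
  set q : ℝ := (cfQ α n : ℝ) with hqdef
  set q' : ℝ := (cfQ α (n + 1) : ℝ)
  have hq2 : (2 : ℝ) ≤ q := by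
    rw [hqdef]; exact_mod_cast (show (2 : ℤ) ≤ cfQ α n by omega)
  have hq'2 : (2 : ℝ) ≤ q' := by
    show (2 : ℝ) ≤ ((cfQ α (n+1) : ℤ) : ℝ); exact_mod_cast hq
  have hqpos : (0 : ℝ) < q := by linarith
  have hq'pos : (0 : ℝ) < q' := by linarith
  -- split l₂ α = k α + (-l₁) * (q * α)
  have hsplit : ((l₂ : ℝ)) * α = (k : ℝ) * α + ((-l₁ : ℤ) : ℝ) * (q * α) := by
    rw [hk]; push_cast; ring
  have h2 : normZ ((l₂ : ℝ) * α) ≤ normZ ((k : ℝ) * α) + |(l₁ : ℝ)| * normZ (q * α) := by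
    rw [hsplit]
    refine (normZ_add_le _ _).trans ?_
    have := normZ_int_mul (-l₁) (q * α)
    push_cast at this ⊢
    rw [abs_neg] at this
    linarith
  have h3 : |(l₁ : ℝ)| * normZ (q * α) ≤ 1 / (10 * q) := by
    calc |(l₁ : ℝ)| * normZ (q * α) ≤ (q' / (10 * q)) * (1 / q') := by
          apply mul_le_mul hl₁ hup (normZ_nonneg _)
          positivity
      _ = 1 / (10 * q) := by field_simp
  have h4 := hlow l₂ hl₂1 hl₂2
  have : 1 / (2 * q) ≤ normZ ((k : ℝ) * α) + 1 / (10 * q) := by linarith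
  have hineq : 1 / (4 * q) ≤ 1 / (2 * q) - 1 / (10 * q) := by
    rw [div_sub_div _ _ (by positivity) (by positivity), div_le_div_iff₀ (by positivity) (by positivity)]
    ring_nf
    nlinarith
  linarith
end

section
/- Let α be irrational and θ ∈ ℝ such that for some integer k_j and n, ‖2θ + k_j α‖_{ℝ/ℤ} ≤ 10η/q_n where 0 < η ≤ 10⁻², and q_n, q_{n+1} are consecutive continued fraction denominators of α with q_{n+1} ≥ 2 q_n. Then for any k = k_j + l₁ q_{n-1} with integer l₁ satisfying 1 ≤ |l₁| ≤ q_n/10, one has ‖2θ + kα‖_{ℝ/ℤ} ≥ |l₁| ‖q_{n-1}α‖_{ℝ/ℤ} − 10η/q_n ≥ 1/(4 q_n). -/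
namespace Stmt4Aux

variable {α : ℝ}

/-- All Gauss iterates are irrational and in (0,1). -/
lemma gauss_mem (hα : Irrational α) (h0 : 0 < α) (h1 : α < 1) (m : ℕ) :
    Irrational (cfGauss^[m] α) ∧ 0 < cfGauss^[m] α ∧ cfGauss^[m] α < 1 := by
  induction m with
  | zero => exact ⟨hα, h0, h1⟩
  | succ m ih =>
    obtain ⟨hi, hp, hl⟩ := ih
    rw [Function.iterate_succ_apply']
    set x := cfGauss^[m] α with hx
    have hinv : Irrational x⁻¹ := hi.inv
    have hfr : Irrational (Int.fract x⁻¹) := by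
      rw [Int.fract]
      exact hinv.sub_intCast _
    refine ⟨hfr, ?_, Int.fract_lt_one _⟩
    rw [cfGauss, Int.fract_pos]
    exact hinv.ne_int _

lemma cfA_pos (hα : Irrational α) (h0 : 0 < α) (h1 : α < 1) (m : ℕ) :
    1 ≤ cfA α m := by
  obtain ⟨_, hp, hl⟩ := gauss_mem hα h0 h1 m
  rw [cfA, Int.le_floor]
  push_cast
  exact one_le_inv_iff₀.mpr ⟨hp, hl.le⟩

lemma cfQ_pos (hα : Irrational α) (h0 : 0 < α) (h1 : α < 1) (m : ℕ) :
    1 ≤ cfQ α m ∧ cfQ α m ≤ cfQ α (m + 1) := by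
  induction m with
  | zero =>
    refine ⟨le_refl _, ?_⟩
    show (1 : ℤ) ≤ cfA α 0
    exact cfA_pos hα h0 h1 0
  | succ m ih =>
    obtain ⟨h1m, h2m⟩ := ih
    have h1m' : 1 ≤ cfQ α (m + 1) := le_trans h1m h2m
    refine ⟨h1m', ?_⟩
    show cfQ α (m + 1) ≤ cfA α (m + 1) * cfQ α (m + 1) + cfQ α m
    nlinarith [cfA_pos hα h0 h1 (m + 1)]

/-- β m = q_m α - p_m -/
noncomputable def beta (α : ℝ) (m : ℕ) : ℝ := (cfQ α m : ℝ) * α - (cfP α m : ℝ)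

lemma beta_succ (hα : Irrational α) (h0 : 0 < α) (h1 : α < 1) (m : ℕ) :
    beta α (m + 1) = -(cfGauss^[m + 1] α) * beta α m := by
  induction m with
  | zero =>
    have hne : α ≠ 0 := ne_of_gt h0
    have hinv : α⁻¹ * α = 1 := inv_mul_cancel₀ hne
    have hG : cfGauss^[1] α = α⁻¹ - (cfA α 0 : ℝ) := by
      have h0' : cfA α 0 = ⌊α⁻¹⌋ := by simp only [cfA, Function.iterate_zero, id_eq]
      rw [Function.iterate_one]
      show Int.fract α⁻¹ = _
      rw [Int.fract, h0']
    rw [hG]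
    simp only [beta, cfQ, cfP]
    push_cast
    linear_combination hinv
  | succ m ih =>
    obtain ⟨_, hp, hl⟩ := gauss_mem hα h0 h1 (m + 1)
    have hne : cfGauss^[m + 1] α ≠ 0 := ne_of_gt hp
    have hit : cfGauss^[m + 2] α = Int.fract ((cfGauss^[m + 1] α)⁻¹) := by
      rw [show m + 2 = (m + 1) + 1 from rfl, Function.iterate_succ_apply']
      rfl
    have hA : (cfA α (m + 1) : ℝ) = (cfGauss^[m + 1] α)⁻¹ - cfGauss^[m + 2] α := by
      rw [hit]
      simp only [cfA, Int.fract]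
      push_cast
      ring
    have hrec : beta α (m + 2) = (cfA α (m + 1) : ℝ) * beta α (m + 1) + beta α m := by
      simp only [beta, cfQ, cfP]
      push_cast
      ring
    show beta α (m + 2) = -(cfGauss^[m + 2] α) * beta α (m + 1)
    rw [hrec, hA, ih]
    have hx : (cfGauss^[m + 1] α)⁻¹ * cfGauss^[m + 1] α = 1 := inv_mul_cancel₀ hne
    linear_combination (-(beta α m)) * hx

lemma det (m : ℕ) :
    cfQ α (m + 1) * cfP α m - cfP α (m + 1) * cfQ α m = (-1) ^ (m + 1) := by
  induction m with
  | zero => simp [cfQ, cfP]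
  | succ m ih =>
    show (cfA α (m + 1) * cfQ α (m + 1) + cfQ α m) * cfP α (m + 1)
      - (cfA α (m + 1) * cfP α (m + 1) + cfP α m) * cfQ α (m + 1) = (-1) ^ (m + 2)
    have h : (-1 : ℤ) ^ (m + 2) = -(-1) ^ (m + 1) := by ring
    rw [h, ← ih]
    ring

lemma beta_bound (hα : Irrational α) (h0 : 0 < α) (h1 : α < 1) (m : ℕ) :
    |beta α m| * (cfQ α (m + 1) : ℝ) < 1 := by
  have hdet : (cfQ α (m + 1) : ℝ) * beta α m - (cfQ α m : ℝ) * beta α (m + 1)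
      = (-1 : ℝ) ^ m := by
    unfold beta
    have := det (α := α) m
    have h2 : ((cfQ α (m + 1) * cfP α m - cfP α (m + 1) * cfQ α m : ℤ) : ℝ)
        = ((-1 : ℤ) ^ (m + 1) : ℝ) := by exact_mod_cast congrArg (Int.cast : ℤ → ℝ) this
    push_cast at h2
    linear_combination (-1 : ℝ) * h2
  obtain ⟨_, hp, hl⟩ := gauss_mem hα h0 h1 (m + 1)
  rw [beta_succ hα h0 h1 m] at hdet
  set x := cfGauss^[m + 1] α
  set b := beta α m
  have hq1 : (1 : ℝ) ≤ (cfQ α m : ℝ) := by exact_mod_cast (cfQ_pos hα h0 h1 m).1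
  have hq2 : (1 : ℝ) ≤ (cfQ α (m + 1) : ℝ) := by exact_mod_cast (cfQ_pos hα h0 h1 (m + 1)).1
  have hcomb : b * ((cfQ α (m + 1) : ℝ) + (cfQ α m : ℝ) * x) = (-1 : ℝ) ^ m := by
    nlinarith [hdet]
  have habs : |b| * ((cfQ α (m + 1) : ℝ) + (cfQ α m : ℝ) * x) = 1 := by
    have hpos : 0 < (cfQ α (m + 1) : ℝ) + (cfQ α m : ℝ) * x := by nlinarith
    have := congrArg abs hcomb
    rw [abs_mul, abs_of_pos hpos, abs_pow, abs_neg, abs_one, one_pow] at this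
    exact this
  have hbpos : 0 < |b| := by
    rcases (abs_nonneg b).lt_or_eq with h' | h'
    · exact h'
    · exfalso
      rw [← h', zero_mul] at habs
      norm_num at habs
  have hprod : 0 < |b| * (cfQ α m : ℝ) * x :=
    mul_pos (mul_pos hbpos (lt_of_lt_of_le one_pos hq1)) hp
  have h5 : |b| * (cfQ α (m + 1) : ℝ) = 1 - |b| * (cfQ α m : ℝ) * x := by
    linear_combination habs
  linarith

lemma normZ_neg_le (x : ℝ) : normZ (-x) ≤ normZ x := by
  have h := round_le (-x) (-(round x))
  have h2 : |(-x) - ((-(round x) : ℤ) : ℝ)| = |x - (round x : ℝ)| := by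
    have h3 : (-x) - ((-(round x) : ℤ) : ℝ) = -(x - (round x : ℝ)) := by push_cast; ring
    rw [h3, abs_neg]
  rw [normZ, normZ, ← h2]
  exact h

lemma normZ_add_le (x y : ℝ) : normZ (x + y) ≤ normZ x + normZ y := by
  have h := round_le (x + y) (round x + round y)
  have h2 : (x + y) - ((round x + round y : ℤ) : ℝ)
      = (x - (round x : ℝ)) + (y - (round y : ℝ)) := by push_cast; ring
  rw [normZ, normZ, normZ]
  calc |(x + y) - (round (x + y) : ℝ)| ≤ |(x + y) - ((round x + round y : ℤ) : ℝ)| := h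
    _ = |(x - (round x : ℝ)) + (y - (round y : ℝ))| := by rw [h2]
    _ ≤ |x - (round x : ℝ)| + |y - (round y : ℝ)| := abs_add_le _ _

end Stmt4Aux

/-- small divisor estimate (1) of the Proposition. -/
theorem stmt4 (α θ η : ℝ) (hα : Irrational α) (h0 : 0 < α) (h1 : α < 1)
    (hη0 : 0 < η) (hη1 : η ≤ 1 / 100)
    (n : ℕ) (hn : 1 ≤ n) (kj : ℤ)
    (hθ : normZ (2 * θ + (kj : ℝ) * α) ≤ 10 * η / (cfQ α n : ℝ))
    (hqgrow : 2 * (cfQ α n : ℝ) ≤ (cfQ α (n + 1) : ℝ))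
    (hqlow : 1 / (2 * (cfQ α n : ℝ)) ≤ normZ ((cfQ α (n - 1) : ℝ) * α))
    (k l₁ : ℤ) (hk : k = kj + l₁ * cfQ α (n - 1))
    (hl₁1 : 1 ≤ |l₁|) (hl₁2 : (|l₁| : ℝ) ≤ (cfQ α n : ℝ) / 10) :
    (|l₁| : ℝ) * normZ ((cfQ α (n - 1) : ℝ) * α) - 10 * η / (cfQ α n : ℝ)
        ≤ normZ (2 * θ + (k : ℝ) * α)
    ∧ 1 / (4 * (cfQ α n : ℝ))
        ≤ (|l₁| : ℝ) * normZ ((cfQ α (n - 1) : ℝ) * α) - 10 * η / (cfQ α n : ℝ) := by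
  open Stmt4Aux in
  have hn1 : n - 1 + 1 = n := Nat.succ_pred_eq_of_pos hn
  have hQ : (1 : ℝ) ≤ (cfQ α n : ℝ) := by
    exact_mod_cast (Stmt4Aux.cfQ_pos hα h0 h1 n).1
  have hQpos : (0 : ℝ) < (cfQ α n : ℝ) := lt_of_lt_of_le one_pos hQ
  -- the norm of q_{n-1} α
  set y : ℝ := (cfQ α (n - 1) : ℝ) * α with hy
  set b : ℝ := normZ y with hb
  have hb0 : 0 ≤ b := abs_nonneg _
  -- upper bound b < 1/q_n via beta
  have hbb : |Stmt4Aux.beta α (n - 1)| * (cfQ α n : ℝ) < 1 := by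
    have := Stmt4Aux.beta_bound hα h0 h1 (n - 1)
    rwa [hn1] at this
  have hble : b ≤ |Stmt4Aux.beta α (n - 1)| := by
    rw [hb, normZ]
    exact round_le y (cfP α (n - 1))
  have hbQ : b * (cfQ α n : ℝ) < 1 := by
    calc b * (cfQ α n : ℝ) ≤ |Stmt4Aux.beta α (n - 1)| * (cfQ α n : ℝ) := by
          apply mul_le_mul_of_nonneg_right hble (le_of_lt hQpos)
      _ < 1 := hbb
  -- |l₁| as a real ≥ 1
  have hl1R : (1 : ℝ) ≤ (|l₁| : ℝ) := by exact_mod_cast hl₁1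
  have habsl : ((|l₁| : ℤ) : ℝ) = |(l₁ : ℝ)| := by push_cast; ring
  -- |l₁| * b < 1/10
  have hlb : (|l₁| : ℝ) * b < 1 / 10 := by
    have h₁ : (|l₁| : ℝ) * b ≤ ((cfQ α n : ℝ) / 10) * b :=
      mul_le_mul_of_nonneg_right hl₁2 hb0
    nlinarith
  -- decompose
  set A : ℝ := 2 * θ + (kj : ℝ) * α with hA
  set B : ℝ := (l₁ : ℝ) * y with hB
  have hAB : 2 * θ + (k : ℝ) * α = A + B := by
    rw [hA, hB, hy, hk]
    push_cast
    ring
  -- lower bound on normZ B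
  set p : ℤ := round y with hp
  have hyb : |y - (p : ℝ)| = b := rfl
  have hNB : (|l₁| : ℝ) * b ≤ normZ B := by
    have hBd : |B - ((l₁ * p : ℤ) : ℝ)| = (|l₁| : ℝ) * b := by
      have h6 : B - ((l₁ * p : ℤ) : ℝ) = (l₁ : ℝ) * (y - (p : ℝ)) := by
        rw [hB]; push_cast; ring
      rw [h6, abs_mul, hyb]
    rcases eq_or_ne (round B) (l₁ * p) with he | he
    · rw [normZ, he, hBd]
    · have hge1 : (1 : ℝ) ≤ |((l₁ * p : ℤ) : ℝ) - ((round B : ℤ) : ℝ)| := by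
        have hne0 : l₁ * p - round B ≠ 0 := sub_ne_zero.mpr (Ne.symm he)
        have h1 : (1 : ℤ) ≤ |l₁ * p - round B| := Int.one_le_abs hne0
        have h1' : (1 : ℝ) ≤ |((l₁ * p - round B : ℤ) : ℝ)| := by
          rw [← Int.cast_abs]
          exact_mod_cast h1
        have h7 : ((l₁ * p - round B : ℤ) : ℝ)
            = ((l₁ * p : ℤ) : ℝ) - ((round B : ℤ) : ℝ) := by push_cast; ring
        rwa [h7] at h1'
      have htri : |((l₁ * p : ℤ) : ℝ) - ((round B : ℤ) : ℝ)|
          ≤ |((l₁ * p : ℤ) : ℝ) - B| + |B - ((round B : ℤ) : ℝ)| := abs_sub_le _ _ _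
      have h5 : |((l₁ * p : ℤ) : ℝ) - B| = (|l₁| : ℝ) * b := by
        rw [abs_sub_comm]; exact hBd
      have h8 : (1 : ℝ) - (|l₁| : ℝ) * b ≤ normZ B := by
        rw [normZ]
        rw [h5] at htri
        linarith
      linarith
  -- reverse triangle inequality
  have hrev : normZ B - normZ A ≤ normZ (A + B) := by
    have h₁ : normZ B ≤ normZ (A + B) + normZ (-A) := by
      have := Stmt4Aux.normZ_add_le (A + B) (-A)
      have h2 : (A + B) + (-A) = B := by ring
      rwa [h2] at this
    have h₂ : normZ (-A) ≤ normZ A := Stmt4Aux.normZ_neg_le A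
    linarith
  constructor
  · rw [hAB]
    have : normZ A ≤ 10 * η / (cfQ α n : ℝ) := hθ
    calc (|l₁| : ℝ) * b - 10 * η / (cfQ α n : ℝ) ≤ normZ B - normZ A := by linarith
      _ ≤ normZ (A + B) := hrev
  · -- arithmetic: |l₁| b - 10η/Q ≥ 1/(4Q)
    set Q : ℝ := (cfQ α n : ℝ) with hQdef
    have hQne : Q ≠ 0 := ne_of_gt hQpos
    have e1 : 10 * η / Q * Q = 10 * η := div_mul_cancel₀ _ hQne
    have e2 : 1 / (4 * Q) * Q = 1 / 4 := by field_simp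
    have e3 : 1 / (2 * Q) * Q = 1 / 2 := by field_simp
    have hmul : 1 / (4 * Q) * Q ≤ ((|l₁| : ℝ) * b - 10 * η / Q) * Q := by
      rw [e2, sub_mul, e1]
      have hbQ2 : (1 : ℝ) / 2 ≤ b * Q := by
        rw [← e3]
        exact mul_le_mul_of_nonneg_right hqlow (le_of_lt hQpos)
      have hl1bQ : b * Q ≤ (|l₁| : ℝ) * b * Q := by
        nlinarith [hb0, hQpos, hl1R]
      linarith
    exact le_of_mul_le_mul_right hmul hQpos
end

section
/- Let α be irrational with continued fraction denominators q_m and θ ∈ ℝ such that ‖2θ + k_j α‖_{ℝ/ℤ} ≤ 10η/q_{2j} for some integer k_j, with 0 < η ≤ 10⁻². Then for any k = k_j + l₁ q_{2j-1} + l₂ with integers l₁, l₂ satisfying |l₁| ≤ q_{2j}/(10 q_{2j-1}) and 1 ≤ l₂ < q_{2j-1}, one has ‖2θ + kα‖_{ℝ/ℤ} ≥ 1/(4 q_{2j-1}), provided η q_{2j} ≥ 10¹⁷ q_{2j-1}. -/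
lemma normZ_le_abs_sub (x : ℝ) (n : ℤ) : normZ x ≤ |x - n| := by
  unfold normZ
  rcases le_or_gt (1/2) |x - n| with h | h
  · exact le_trans (abs_sub_round x) h
  · have h1 : n - (1:ℝ)/2 < x ∧ x < n + 1/2 := by
      constructor <;> [skip; skip] <;> cases abs_lt.mp h <;> linarith [abs_lt.mp h |>.1, abs_lt.mp h |>.2]
    have : round x = n := by
      rw [round_eq]
      have : (⌊x + 1/2⌋ : ℤ) = n := by
        apply Int.floor_eq_iff.mpr
        constructor <;> push_cast <;> linarith [h1.1, h1.2]
      exact this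
    rw [this]

lemma normZ_tri (a b c : ℝ) : normZ c - normZ a - normZ b ≤ normZ (a + b + c) := by
  have h := normZ_le_abs_sub c ((round (a + b + c) : ℤ) - round a - round b)
  have heq : c - (((round (a + b + c) : ℤ) - round a - round b : ℤ) : ℝ)
      = (a + b + c - round (a + b + c)) - (a - round a) - (b - round b) := by
    push_cast; ring
  rw [heq] at h
  have h2 : |(a + b + c - round (a + b + c)) - (a - round a) - (b - round b)|
      ≤ |a + b + c - round (a + b + c)| + |a - round a| + |b - round b| := by
    calc _ ≤ |(a + b + c - round (a + b + c)) - (a - round a)| + |b - round b| := abs_sub _ _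
      _ ≤ |a + b + c - round (a + b + c)| + |a - round a| + |b - round b| := by
          have := abs_sub (a + b + c - round (a + b + c)) (a - round a)
          linarith
  unfold normZ at *
  linarith

/-- small divisor estimate (2) of the Proposition. -/
theorem stmt5 (α θ η : ℝ) (hα : Irrational α) (h0 : 0 < α) (h1 : α < 1)
    (hη0 : 0 < η) (hη1 : η ≤ 1 / 100) (j : ℕ) (hj : 1 ≤ j) (kj : ℤ)
    (hθ : normZ (2 * θ + (kj : ℝ) * α) ≤ 10 * η / (cfQ α (2 * j) : ℝ))
    (hgap : 10 ^ 17 * (cfQ α (2 * j - 1) : ℝ) ≤ η * (cfQ α (2 * j) : ℝ))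
    (hqup : normZ ((cfQ α (2 * j - 1) : ℝ) * α) ≤ 1 / (cfQ α (2 * j) : ℝ))
    (hqlow : ∀ l : ℤ, 1 ≤ l → l < cfQ α (2 * j - 1) →
      1 / (2 * (cfQ α (2 * j - 1) : ℝ)) ≤ normZ ((l : ℝ) * α))
    (k l₁ l₂ : ℤ) (hk : k = kj + l₁ * cfQ α (2 * j - 1) + l₂)
    (hl₁ : |(l₁ : ℝ)| ≤ (cfQ α (2 * j) : ℝ) / (10 * (cfQ α (2 * j - 1) : ℝ)))
    (hl₂1 : 1 ≤ l₂) (hl₂2 : l₂ < cfQ α (2 * j - 1)) :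
    1 / (4 * (cfQ α (2 * j - 1) : ℝ)) ≤ normZ (2 * θ + (k : ℝ) * α) := by
  set Q' : ℝ := (cfQ α (2 * j - 1) : ℝ) with hQ'
  set Q : ℝ := (cfQ α (2 * j) : ℝ) with hQ
  have hQ'2 : (2 : ℝ) ≤ Q' := by
    have : (2 : ℤ) ≤ cfQ α (2 * j - 1) := by omega
    rw [hQ']
    exact_mod_cast this
  have hQ'pos : 0 < Q' := by linarith
  have hQpos : 0 < Q := by nlinarith
  -- decompose
  have hdecomp : 2 * θ + (k : ℝ) * α
      = (2 * θ + (kj : ℝ) * α) + ((l₁ : ℝ) * (Q' * α)) + ((l₂ : ℝ) * α) := by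
    rw [hk]; push_cast; ring
  have h1 : 1 / (2 * Q') ≤ normZ ((l₂ : ℝ) * α) := hqlow l₂ hl₂1 hl₂2
  have h2 : normZ ((l₁ : ℝ) * (Q' * α)) ≤ 1 / (10 * Q') := by
    have ha := normZ_int_mul l₁ (Q' * α)
    have hb : |(l₁ : ℝ)| * normZ (Q' * α) ≤ (Q / (10 * Q')) * (1 / Q) := by
      apply mul_le_mul hl₁ hqup (by unfold normZ; positivity) (by positivity)
    have hc : (Q / (10 * Q')) * (1 / Q) = 1 / (10 * Q') := by
      field_simp
    linarith [ha, hb, hc ▸ hb]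
  have htri := normZ_tri (2 * θ + (kj : ℝ) * α) ((l₁ : ℝ) * (Q' * α)) ((l₂ : ℝ) * α)
  rw [← hdecomp] at htri
  have hsmall : 10 * η / Q ≤ 3 / (20 * Q') := by
    rw [div_le_div_iff₀ hQpos (by positivity)]
    nlinarith [mul_le_mul_of_nonneg_right hη1 hQpos.le,
      mul_le_mul_of_nonneg_right hη1 hQ'pos.le]
  have harith : 1 / (4 * Q') ≤ 1 / (2 * Q') - 10 * η / Q - 1 / (10 * Q') := by
    have : 1 / (2 * Q') - 1 / (10 * Q') - 1 / (4 * Q') = 3 / (20 * Q') := by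
      field_simp; ring
    linarith
  linarith
end

section
/- Let α be irrational with continued fraction denominators q_m and θ ∈ ℝ with ‖2θ + k_j α‖_{ℝ/ℤ} ≤ 10η/q_{2j} for some integer k_j, with 0 < η ≤ 10⁻². Then for any k = k_j + l₁ q_{2j} + l₂ with |l₁| ≤ 10η q_{2j+1}/q_{2j} and 1 ≤ l₂ < q_{2j}, one has ‖2θ + kα‖_{ℝ/ℤ} ≥ 1/(2q_{2j}) − 20η/q_{2j} ≥ 1/(4 q_{2j}). -/
lemma normZ_eq (x : ℝ) : normZ x = ‖(x : UnitAddCircle)‖ := (UnitAddCircle.norm_eq).symm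

lemma gauss_iter (α : ℝ) (hα : Irrational α) (h0 : 0 < α) (h1 : α < 1) (n : ℕ) :
    Irrational (cfGauss^[n] α) ∧ 0 < cfGauss^[n] α ∧ cfGauss^[n] α < 1 := by
  induction n with
  | zero => exact ⟨hα, h0, h1⟩
  | succ n ih =>
    obtain ⟨hi, hp, hl⟩ := ih
    rw [Function.iterate_succ_apply']
    have hinv : Irrational (cfGauss^[n] α)⁻¹ := hi.inv
    have hfr : Irrational (Int.fract (cfGauss^[n] α)⁻¹) := by
      rw [Int.fract]
      exact hinv.sub_intCast _
    refine ⟨hfr, ?_, Int.fract_lt_one _⟩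
    exact lt_of_le_of_ne (Int.fract_nonneg _) (Ne.symm hfr.ne_zero)

lemma cfA_pos (α : ℝ) (hα : Irrational α) (h0 : 0 < α) (h1 : α < 1) (n : ℕ) :
    1 ≤ cfA α n := by
  obtain ⟨_, hp, hl⟩ := gauss_iter α hα h0 h1 n
  have : (1 : ℝ) < (cfGauss^[n] α)⁻¹ := (one_lt_inv₀ hp).2 hl
  exact Int.le_floor.2 (by exact_mod_cast this.le)

lemma cfQ_pos (α : ℝ) (hα : Irrational α) (h0 : 0 < α) (h1 : α < 1) :
    ∀ n, 1 ≤ cfQ α n := by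
  have hA := cfA_pos α hα h0 h1
  intro n
  induction n using Nat.strong_induction_on with
  | _ n ih =>
    match n with
    | 0 => simp [cfQ]
    | 1 => simpa [cfQ] using hA 0
    | (m+2) =>
      have h1' := ih (m+1) (by omega)
      have h0' := ih m (by omega)
      have := hA (m+1)
      simp only [cfQ]
      nlinarith

/-- small divisor estimate (4) of the Proposition. -/
theorem stmt7 (α θ η : ℝ) (hα : Irrational α) (h0 : 0 < α) (h1 : α < 1)
    (hη0 : 0 < η) (hη1 : η ≤ 1 / 100) (j : ℕ) (kj : ℤ)
    (hθ : normZ (2 * θ + (kj : ℝ) * α) ≤ 10 * η / (cfQ α (2 * j) : ℝ))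
    (hqup : normZ ((cfQ α (2 * j) : ℝ) * α) ≤ 1 / (cfQ α (2 * j + 1) : ℝ))
    (hqlow : ∀ l : ℤ, 1 ≤ l → l < cfQ α (2 * j) →
      1 / (2 * (cfQ α (2 * j) : ℝ)) ≤ normZ ((l : ℝ) * α))
    (k l₁ l₂ : ℤ) (hk : k = kj + l₁ * cfQ α (2 * j) + l₂)
    (hl₁ : |(l₁ : ℝ)| ≤ 10 * η * (cfQ α (2 * j + 1) : ℝ) / (cfQ α (2 * j) : ℝ))
    (hl₂1 : 1 ≤ l₂) (hl₂2 : l₂ < cfQ α (2 * j)) :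
    1 / (2 * (cfQ α (2 * j) : ℝ)) - 20 * η / (cfQ α (2 * j) : ℝ)
        ≤ normZ (2 * θ + (k : ℝ) * α)
    ∧ 1 / (4 * (cfQ α (2 * j) : ℝ))
        ≤ 1 / (2 * (cfQ α (2 * j) : ℝ)) - 20 * η / (cfQ α (2 * j) : ℝ) := by
  have hQ : (1 : ℝ) ≤ (cfQ α (2 * j) : ℝ) := by exact_mod_cast cfQ_pos α hα h0 h1 (2 * j)
  have hQ' : (1 : ℝ) ≤ (cfQ α (2 * j + 1) : ℝ) := by
    exact_mod_cast cfQ_pos α hα h0 h1 (2 * j + 1)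
  set Q : ℝ := (cfQ α (2 * j) : ℝ)
  set Q' : ℝ := (cfQ α (2 * j + 1) : ℝ)
  have hQ0 : (0 : ℝ) < Q := lt_of_lt_of_le one_pos hQ
  have hQ'0 : (0 : ℝ) < Q' := lt_of_lt_of_le one_pos hQ'
  -- triangle inequality chain
  have hdecomp : (l₂ : ℝ) * α =
      (2 * θ + (k : ℝ) * α) - (2 * θ + (kj : ℝ) * α) - l₁ • (Q * α) := by
    have : (k : ℝ) = (kj : ℝ) + (l₁ : ℝ) * Q + (l₂ : ℝ) := by
      rw [hk]; push_cast; ring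
    rw [zsmul_eq_mul, this]; ring
  have htri : normZ ((l₂ : ℝ) * α)
      ≤ normZ (2 * θ + (k : ℝ) * α) + normZ (2 * θ + (kj : ℝ) * α)
        + |(l₁ : ℝ)| * normZ (Q * α) := by
    simp only [normZ_eq]
    rw [hdecomp]
    calc ‖(((2 * θ + (k : ℝ) * α) : ℝ) : UnitAddCircle)
            - ((2 * θ + (kj : ℝ) * α : ℝ) : UnitAddCircle)
            - l₁ • ((Q * α : ℝ) : UnitAddCircle)‖
        ≤ ‖(((2 * θ + (k : ℝ) * α) : ℝ) : UnitAddCircle)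
            - ((2 * θ + (kj : ℝ) * α : ℝ) : UnitAddCircle)‖
          + ‖l₁ • ((Q * α : ℝ) : UnitAddCircle)‖ := norm_sub_le _ _
      _ ≤ (‖(((2 * θ + (k : ℝ) * α) : ℝ) : UnitAddCircle)‖
            + ‖((2 * θ + (kj : ℝ) * α : ℝ) : UnitAddCircle)‖)
          + ‖(l₁ : ℤ)‖ * ‖((Q * α : ℝ) : UnitAddCircle)‖ :=
          add_le_add (norm_sub_le _ _) (norm_zsmul_le _ _)
      _ = _ := by push_cast [Int.norm_eq_abs]; ring
  have hlow := hqlow l₂ hl₂1 hl₂2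
  have hsm : |(l₁ : ℝ)| * normZ (Q * α) ≤ 10 * η / Q := by
    have h1 : 0 ≤ normZ (Q * α) := abs_nonneg _
    calc |(l₁ : ℝ)| * normZ (Q * α) ≤ (10 * η * Q' / Q) * (1 / Q') :=
          mul_le_mul hl₁ hqup h1 (by positivity)
      _ = 10 * η / Q := by field_simp
  constructor
  · have h20 : 20 * η / Q = 10 * η / Q + 10 * η / Q := by ring
    linarith
  · have ha : 20 * η / Q ≤ (1/4) / Q := by gcongr; linarith
    have hb : 1 / (2*Q) - (1/4) / Q = 1 / (4*Q) := by field_simp; ring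
    linarith
end

section
/- Fix 0 < η ≤ 10⁻² and an irrational α whose continued fraction denominators satisfy η q_{2j+1} ≥ 10¹⁷ q_{2j} for all j ≥ j₀. Define k_{j₀} = k₀ (an integer with (−k₀α mod 1) ∈ [1/10, 1/5]) and inductively k_{j+1} = k_j + ⌊η q_{2j+1}/q_{2j}⌋ q_{2j}. Then for every j ≥ j₀, ((−k_{j+1}α) mod 1) − ((−k_j α) mod 1) lies in the interval [−η/q_{2j}, −η/(4 q_{2j})]. -/
lemma gauss_iter_mem (α : ℝ) (hα : Irrational α) (h0 : 0 < α) (h1 : α < 1) :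
    ∀ n, Irrational (cfGauss^[n] α) ∧ 0 < cfGauss^[n] α ∧ cfGauss^[n] α < 1 := by
  intro n
  induction n with
  | zero => exact ⟨hα, h0, h1⟩
  | succ n ih =>
    obtain ⟨hirr, hpos, hlt⟩ := ih
    rw [Function.iterate_succ_apply']
    set x := cfGauss^[n] α
    have hinv : Irrational x⁻¹ := hirr.inv
    have hg : Irrational (cfGauss x) := by
      unfold cfGauss Int.fract
      exact hinv.sub_intCast _
    refine ⟨hg, ?_, Int.fract_lt_one _⟩
    rw [cfGauss, Int.fract_pos]
    exact hinv.ne_int _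

lemma cfA_one_le (α : ℝ) (hα : Irrational α) (h0 : 0 < α) (h1 : α < 1) (n : ℕ) :
    (1 : ℤ) ≤ cfA α n := by
  obtain ⟨_, hpos, hlt⟩ := gauss_iter_mem α hα h0 h1 n
  rw [cfA, Int.le_floor]
  push_cast
  rw [le_inv_comm₀ one_pos hpos]
  linarith

lemma cfQ_one_le_and_mono (α : ℝ) (hα : Irrational α) (h0 : 0 < α) (h1 : α < 1) :
    ∀ n, (1 : ℤ) ≤ cfQ α n ∧ cfQ α n ≤ cfQ α (n + 1) := by
  intro n
  induction n with
  | zero =>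
    refine ⟨le_refl _, ?_⟩
    show (1 : ℤ) ≤ cfA α 0
    exact cfA_one_le α hα h0 h1 0
  | succ n ih =>
    obtain ⟨h1', h2'⟩ := ih
    have hq1 : (1 : ℤ) ≤ cfQ α (n + 1) := le_trans h1' h2'
    have ha : (1 : ℤ) ≤ cfA α (n + 1) := cfA_one_le α hα h0 h1 (n + 1)
    refine ⟨hq1, ?_⟩
    show cfQ α (n + 1) ≤ cfA α (n + 1) * cfQ α (n + 1) + cfQ α n
    nlinarith

/-- increments of the fractional parts along the constructed sequence k_j. -/
theorem stmt8 (α η : ℝ) (hα : Irrational α) (h0 : 0 < α) (h1 : α < 1)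
    (hη0 : 0 < η) (hη1 : η ≤ 1 / 100) (j₀ : ℕ) (k₀ : ℤ) (k : ℕ → ℤ)
    (hk₀ : Int.fract (-(k₀ : ℝ) * α) ∈ Set.Icc (1 / 10 : ℝ) (1 / 5))
    (hkinit : k j₀ = k₀)
    (hkrec : ∀ j, j₀ ≤ j →
      k (j + 1) = k j + ⌊η * (cfQ α (2 * j + 1) : ℝ) / (cfQ α (2 * j) : ℝ)⌋ * cfQ α (2 * j))
    (hgap : ∀ j, j₀ ≤ j → 10 ^ 17 * (cfQ α (2 * j) : ℝ) ≤ η * (cfQ α (2 * j + 1) : ℝ))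
    (hconv1 : ∀ j, 1 / ((cfQ α (2 * j) : ℝ) + (cfQ α (2 * j + 1) : ℝ))
        ≤ (cfQ α (2 * j) : ℝ) * α - (cfP α (2 * j) : ℝ))
    (hconv2 : ∀ j, (cfQ α (2 * j) : ℝ) * α - (cfP α (2 * j) : ℝ)
        ≤ 1 / (cfQ α (2 * j + 1) : ℝ)) :
    ∀ j, j₀ ≤ j →
      Int.fract (-(k (j + 1) : ℝ) * α) - Int.fract (-(k j : ℝ) * α)
        ∈ Set.Icc (-η / (cfQ α (2 * j) : ℝ)) (-η / (4 * (cfQ α (2 * j) : ℝ))) := by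
  have hq := cfQ_one_le_and_mono α hα h0 h1
  have hQ1 : ∀ n, (1 : ℝ) ≤ (cfQ α n : ℝ) := fun n => by exact_mod_cast (hq n).1
  have hQ0 : ∀ n, (0 : ℝ) < (cfQ α n : ℝ) := fun n => lt_of_lt_of_le one_pos (hQ1 n)
  have hQmono : ∀ n, (cfQ α n : ℝ) ≤ (cfQ α (n + 1) : ℝ) := fun n => by
    exact_mod_cast (hq n).2
  -- notation
  set β : ℕ → ℝ := fun j => (cfQ α (2 * j) : ℝ) * α - (cfP α (2 * j) : ℝ) with hβ
  set D : ℕ → ℝ := fun j => Int.fract (-(k j : ℝ) * α) with hD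
  -- Q' ≥ 2 Q for j ≥ j₀
  have hQQ' : ∀ j, j₀ ≤ j → 2 * (cfQ α (2 * j) : ℝ) ≤ (cfQ α (2 * j + 1) : ℝ) := by
    intro j hj
    have := hgap j hj
    have h0' := hQ0 (2 * j)
    have h1' := hQ0 (2 * j + 1)
    nlinarith
  -- bounds on the decrement
  have key : ∀ j, j₀ ≤ j →
      η / (4 * (cfQ α (2 * j) : ℝ)) ≤
        (⌊η * (cfQ α (2 * j + 1) : ℝ) / (cfQ α (2 * j) : ℝ)⌋ : ℝ) * β j ∧
      (⌊η * (cfQ α (2 * j + 1) : ℝ) / (cfQ α (2 * j) : ℝ)⌋ : ℝ) * β j ≤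
        η / (cfQ α (2 * j) : ℝ) := by
    intro j hj
    set Q := (cfQ α (2 * j) : ℝ)
    set Q' := (cfQ α (2 * j + 1) : ℝ)
    have hQpos : 0 < Q := hQ0 _
    have hQ'pos : 0 < Q' := hQ0 _
    set x := η * Q' / Q with hx
    have hx17 : (10 : ℝ) ^ 17 ≤ x := by
      rw [hx, le_div_iff₀ hQpos]
      exact hgap j hj
    have hm1 : (⌊x⌋ : ℝ) ≤ x := Int.floor_le x
    have hm2 : x - 1 ≤ (⌊x⌋ : ℝ) := by linarith [Int.lt_floor_add_one x]
    have hm3 : x / 2 ≤ (⌊x⌋ : ℝ) := by nlinarith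
    have hβlo : 1 / (Q + Q') ≤ β j := hconv1 j
    have hβhi : β j ≤ 1 / Q' := hconv2 j
    have hβpos : 0 < β j := lt_of_lt_of_le (by positivity) hβlo
    have hQQ : 2 * Q ≤ Q' := hQQ' j hj
    constructor
    · have h1 : η / (4 * Q) = (x / 2) * (1 / (2 * Q')) := by
        rw [hx]; field_simp; ring
      have h2 : (x / 2) * (1 / (2 * Q')) ≤ (⌊x⌋ : ℝ) * β j := by
        apply mul_le_mul hm3 _ (by positivity) (by nlinarith)
        calc 1 / (2 * Q') ≤ 1 / (Q + Q') := by
              apply one_div_le_one_div_of_le (by positivity)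
              linarith
          _ ≤ β j := hβlo
      linarith
    · have h2 : (⌊x⌋ : ℝ) * β j ≤ x * (1 / Q') := by
        apply mul_le_mul hm1 hβhi (le_of_lt hβpos) (by nlinarith)
      have h3 : x * (1 / Q') = η / Q := by
        rw [hx]; field_simp
      linarith
  -- step identity
  have hstep : ∀ j, j₀ ≤ j → η ≤ D j →
      D (j + 1) = D j - (⌊η * (cfQ α (2 * j + 1) : ℝ) / (cfQ α (2 * j) : ℝ)⌋ : ℝ) * β j := by
    intro j hj hDj
    set m := ⌊η * (cfQ α (2 * j + 1) : ℝ) / (cfQ α (2 * j) : ℝ)⌋ with hm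
    obtain ⟨hlo, hhi⟩ := key j hj
    have hQpos := hQ0 (2 * j)
    have hmβpos : 0 < (m : ℝ) * β j :=
      lt_of_lt_of_le (by positivity) hlo
    have hmβsmall : (m : ℝ) * β j ≤ η := by
      calc (m : ℝ) * β j ≤ η / (cfQ α (2 * j) : ℝ) := hhi
        _ ≤ η / 1 := by apply div_le_div_of_nonneg_left (le_of_lt hη0) one_pos (hQ1 _)
        _ = η := div_one η
    have heq : -(k (j + 1) : ℝ) * α =
        (-(k j : ℝ) * α - (m : ℝ) * β j) - ((m * cfP α (2 * j) : ℤ) : ℝ) := by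
      rw [hkrec j hj]
      push_cast
      rw [hβ]
      ring
    have this1 : D (j + 1) = Int.fract (-(k j : ℝ) * α - (m : ℝ) * β j) := by
      show Int.fract (-(k (j + 1) : ℝ) * α) = _
      rw [heq, Int.fract_sub_intCast]
    rw [this1]
    have hDdef : D j = -(k j : ℝ) * α - (⌊-(k j : ℝ) * α⌋ : ℝ) := rfl
    have hsplit : -(k j : ℝ) * α - (m : ℝ) * β j =
        (⌊-(k j : ℝ) * α⌋ : ℝ) + (D j - (m : ℝ) * β j) := by
      rw [hDdef]; ring
    rw [hsplit, Int.fract_intCast_add, Int.fract_eq_self.2]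
    constructor
    · linarith
    · have hD1 : D j < 1 := Int.fract_lt_one _
      linarith
  -- growth of Q(2j)
  have hgrow : ∀ j, j₀ ≤ j → (2 : ℝ) ^ (j - j₀) ≤ (cfQ α (2 * j) : ℝ) := by
    intro j hj
    induction j, hj using Nat.le_induction with
    | base => simpa using hQ1 (2 * j₀)
    | succ j hj ih =>
      have hQQ : 2 * (cfQ α (2 * j) : ℝ) ≤ (cfQ α (2 * j + 1) : ℝ) := hQQ' j hj
      have h2 : (cfQ α (2 * j + 1) : ℝ) ≤ (cfQ α (2 * (j + 1)) : ℝ) := by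
        have : 2 * (j + 1) = (2 * j + 1) + 1 := by ring
        rw [this]
        exact hQmono (2 * j + 1)
      have hexp : (j + 1) - j₀ = (j - j₀) + 1 := by omega
      rw [hexp, pow_succ]
      nlinarith [hQ0 (2 * j)]
  -- invariant
  have hinv : ∀ j, j₀ ≤ j →
      1 / 10 - 2 * η + 2 * η * (1 / 2 : ℝ) ^ (j - j₀) ≤ D j := by
    intro j hj
    induction j, hj using Nat.le_induction with
    | base =>
      have : D j₀ = Int.fract (-(k₀ : ℝ) * α) := by rw [hD]; simp [hkinit]
      rw [this]
      have := hk₀.1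
      simp only [Nat.sub_self, pow_zero]
      linarith
    | succ j hj ih =>
      have hηD : η ≤ D j := by
        have hp : (0 : ℝ) < 2 * η * (1 / 2 : ℝ) ^ (j - j₀) := by positivity
        linarith
      have hs := hstep j hj hηD
      obtain ⟨hlo, hhi⟩ := key j hj
      have hdec : (⌊η * (cfQ α (2 * j + 1) : ℝ) / (cfQ α (2 * j) : ℝ)⌋ : ℝ) * β j ≤
          η * (1 / 2 : ℝ) ^ (j - j₀) := by
        have hg := hgrow j hj
        have hq2 : (0 : ℝ) < (2 : ℝ) ^ (j - j₀) := by positivity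
        calc (⌊η * (cfQ α (2 * j + 1) : ℝ) / (cfQ α (2 * j) : ℝ)⌋ : ℝ) * β j
            ≤ η / (cfQ α (2 * j) : ℝ) := hhi
          _ ≤ η / (2 : ℝ) ^ (j - j₀) := by
              apply div_le_div_of_nonneg_left (le_of_lt hη0) hq2 hg
          _ = η * (1 / 2 : ℝ) ^ (j - j₀) := by
              rw [one_div, inv_pow, div_eq_mul_inv]
      have hexp : (j + 1) - j₀ = (j - j₀) + 1 := by omega
      rw [hexp, pow_succ, hs]
      have : 2 * η * ((1 / 2 : ℝ) ^ (j - j₀) * (1 / 2)) = η * (1 / 2 : ℝ) ^ (j - j₀) := by ring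
      linarith
  -- conclusion
  intro j hj
  have hηD : η ≤ D j := by
    have hp : (0 : ℝ) < 2 * η * (1 / 2 : ℝ) ^ (j - j₀) := by positivity
    have := hinv j hj
    linarith
  have hs := hstep j hj hηD
  obtain ⟨hlo, hhi⟩ := key j hj
  constructor
  · show -η / (cfQ α (2 * j) : ℝ) ≤ _
    have : Int.fract (-(k (j + 1) : ℝ) * α) - Int.fract (-(k j : ℝ) * α) =
        -((⌊η * (cfQ α (2 * j + 1) : ℝ) / (cfQ α (2 * j) : ℝ)⌋ : ℝ) * β j) := by
      rw [show Int.fract (-(k (j + 1) : ℝ) * α) = D (j + 1) from rfl,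
        show Int.fract (-(k j : ℝ) * α) = D j from rfl, hs]; ring
    rw [this, neg_div]
    linarith
  · show _ ≤ -η / (4 * (cfQ α (2 * j) : ℝ))
    have : Int.fract (-(k (j + 1) : ℝ) * α) - Int.fract (-(k j : ℝ) * α) =
        -((⌊η * (cfQ α (2 * j + 1) : ℝ) / (cfQ α (2 * j) : ℝ)⌋ : ℝ) * β j) := by
      rw [show Int.fract (-(k (j + 1) : ℝ) * α) = D (j + 1) from rfl,
        show Int.fract (-(k j : ℝ) * α) = D j from rfl, hs]; ring
    rw [this, neg_div]
    linarith
end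

section
/- Define a₁ = ⌊2/μ⌋ + 10 and inductively q_n = a_n q_{n-1} + q_{n-2} (q_{-1}=0, q_0=1), a_{n+1} = ⌊exp(μ q_n)⌋, for a fixed 0 < μ < ∞. Let α = [a₁, a₂, ...] be the irrational number with these partial quotients. Then β(α) := limsup_n (ln q_{n+1})/q_n = μ. -/
/-- the constructed α has β(α) = limsup ln q_{n+1}/q_n = μ. -/
theorem stmt14 (μ : ℝ) (hμ : 0 < μ) (a : ℕ → ℤ) (q : ℕ → ℤ)
    (ha1 : a 1 = ⌊2 / μ⌋ + 10)
    (hq0 : q 0 = 1) (hq1 : q 1 = a 1)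
    (hqrec : ∀ n : ℕ, q (n + 2) = a (n + 2) * q (n + 1) + q n)
    (harec : ∀ n : ℕ, 1 ≤ n → a (n + 1) = ⌊Real.exp (μ * (q n : ℝ))⌋) :
    Filter.limsup (fun n : ℕ => Real.log (q (n + 1)) / (q n : ℝ)) Filter.atTop = μ := by
  -- Basic positivity and growth of q
  have h2μ : (0:ℤ) ≤ ⌊2/μ⌋ := Int.floor_nonneg.2 (by positivity)
  have key : ∀ n : ℕ, (1 ≤ q n ∧ (n:ℤ) ≤ q n) ∧ (1 ≤ q (n+1) ∧ (n:ℤ)+1 ≤ q (n+1)) := by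
    intro n
    induction n with
    | zero =>
      refine ⟨⟨by simp [hq0], by simp [hq0]⟩, ?_, ?_⟩ <;> rw [hq1, ha1] <;> push_cast <;> omega
    | succ n ih =>
      refine ⟨ih.2, ?_⟩
      have ha : 1 ≤ a (n+2) := by
        rw [show n+2 = (n+1)+1 from rfl, harec (n+1) (by omega)]
        refine Int.le_floor.2 ?_
        push_cast
        refine Real.one_le_exp ?_
        have : (0:ℝ) ≤ (q (n+1) : ℝ) := by exact_mod_cast le_trans zero_le_one ih.2.1
        positivity
      have hr := hqrec n
      have h1 := ih.1.1
      have h2 := ih.2.1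
      have h3 := ih.1.2
      have h4 := ih.2.2
      push_cast
      constructor <;> nlinarith [mul_le_mul_of_nonneg_right ha (le_trans zero_le_one h2)]
  have hq1' : ∀ n : ℕ, 1 ≤ q n := fun n => (key n).1.1
  have hqn : ∀ n : ℕ, (n:ℤ) ≤ q n := fun n => (key n).1.2
  have hA : ∀ n : ℕ, 1 ≤ a (n+2) := by
    intro n
    rw [show n+2 = (n+1)+1 from rfl, harec (n+1) (by omega)]
    refine Int.le_floor.2 ?_
    push_cast
    refine Real.one_le_exp ?_
    have : (0:ℝ) ≤ (q (n+1) : ℝ) := by exact_mod_cast le_trans zero_le_one (hq1' (n+1))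
    positivity
  have hmono : ∀ n : ℕ, q n ≤ q (n+1) := by
    intro n
    match n with
    | 0 => rw [hq0, hq1, ha1]; omega
    | Nat.succ m =>
      have hr := hqrec m
      nlinarith [hA m, hq1' m, hq1' (m+1), mul_le_mul_of_nonneg_right (hA m)
        (le_trans zero_le_one (hq1' (m+1)))]
  -- real-valued facts
  have hqR : ∀ n : ℕ, (1:ℝ) ≤ (q n : ℝ) := fun n => by exact_mod_cast hq1' n
  have hqtop : Filter.Tendsto (fun n : ℕ => (q n : ℝ)) Filter.atTop Filter.atTop := by
    refine Filter.tendsto_atTop_mono (fun n => ?_) tendsto_natCast_atTop_atTop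
    exact_mod_cast hqn n
  -- limits of the bounding sequences
  have hliml : Filter.Tendsto (fun n : ℕ => μ - Real.log 2 / (q n : ℝ)) Filter.atTop (nhds μ) := by
    have := Filter.Tendsto.div_atTop (tendsto_const_nhds (x := Real.log 2)) hqtop
    simpa using (tendsto_const_nhds (x := μ)).sub this
  have hlimu : Filter.Tendsto (fun n : ℕ => μ + (Real.log 2 + Real.log (q n)) / (q n : ℝ))
      Filter.atTop (nhds μ) := by
    have h1 := Filter.Tendsto.div_atTop (tendsto_const_nhds (x := Real.log 2)) hqtop
    have h2 : Filter.Tendsto (fun n : ℕ => Real.log (q n) / (q n : ℝ)) Filter.atTop (nhds 0) := by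
      have := (Real.isLittleO_log_id_atTop.comp_tendsto hqtop).tendsto_div_nhds_zero
      simpa [Function.comp] using this
    have := (tendsto_const_nhds (x := μ)).add ((h1.add h2).congr (by
      intro n; rw [← add_div]))
    simpa using this
  -- eventual squeeze inequalities
  have hev : ∀ᶠ n : ℕ in Filter.atTop,
      (μ - Real.log 2 / (q n : ℝ) ≤ Real.log (q (n+1)) / (q n : ℝ) ∧
       Real.log (q (n+1)) / (q n : ℝ) ≤ μ + (Real.log 2 + Real.log (q n)) / (q n : ℝ)) := by
    have hev1 : ∀ᶠ n : ℕ in Filter.atTop, (1:ℝ) ≤ μ * (q n : ℝ) := by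
      have : Filter.Tendsto (fun n : ℕ => μ * (q n : ℝ)) Filter.atTop Filter.atTop :=
        hqtop.const_mul_atTop hμ
      exact this.eventually_ge_atTop 1
    filter_upwards [Filter.eventually_ge_atTop 1, hev1] with n hn hx
    obtain ⟨m, rfl⟩ : ∃ m, n = m + 1 := ⟨n - 1, by omega⟩
    set x := μ * (q (m+1) : ℝ) with hxdef
    have hE2 : (2:ℝ) ≤ Real.exp x := by
      calc (2:ℝ) ≤ Real.exp 1 := by
            have := Real.add_one_le_exp 1; linarith
        _ ≤ Real.exp x := Real.exp_le_exp.2 hx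
    have hqpos : (0:ℝ) < (q (m+1) : ℝ) := lt_of_lt_of_le zero_lt_one (hqR (m+1))
    -- the recursion in ℝ
    have hfl : (q (m+2) : ℝ) = (⌊Real.exp x⌋ : ℝ) * (q (m+1) : ℝ) + (q m : ℝ) := by
      have h := hqrec m
      rw [show m+2 = (m+1)+1 from rfl, harec (m+1) (by omega)] at h
      exact_mod_cast h
    have hflo : Real.exp x - 1 ≤ (⌊Real.exp x⌋ : ℝ) := le_of_lt (Int.sub_one_lt_floor _)
    have hfhi : (⌊Real.exp x⌋ : ℝ) ≤ Real.exp x := Int.floor_le _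
    have hqm : (0:ℝ) ≤ (q m : ℝ) := le_trans zero_le_one (hqR m)
    -- lower bound: q(m+2) ≥ exp x / 2
    have hlow : Real.exp x / 2 ≤ (q (m+2) : ℝ) := by
      have h1 : (Real.exp x - 1) * 1 ≤ (⌊Real.exp x⌋ : ℝ) * (q (m+1) : ℝ) := by
        apply mul_le_mul hflo (hqR (m+1)) zero_le_one
        linarith
      rw [hfl]; nlinarith
    -- upper bound: q(m+2) ≤ 2 * exp x * q(m+1)
    have hup : (q (m+2) : ℝ) ≤ 2 * Real.exp x * (q (m+1) : ℝ) := by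
      have hmm : (q m : ℝ) ≤ (q (m+1) : ℝ) := by exact_mod_cast hmono m
      have h1 : (⌊Real.exp x⌋ : ℝ) * (q (m+1) : ℝ) ≤ Real.exp x * (q (m+1) : ℝ) :=
        mul_le_mul_of_nonneg_right hfhi (le_of_lt hqpos)
      have h2 : (q (m+1) : ℝ) ≤ Real.exp x * (q (m+1) : ℝ) := by nlinarith
      rw [hfl]; nlinarith
    have hq2pos : (0:ℝ) < (q (m+2) : ℝ) := lt_of_lt_of_le (by linarith) hlow
    constructor
    · -- lower squeeze bound
      have hlog : μ * (q (m+1) : ℝ) - Real.log 2 ≤ Real.log (q (m+2)) := by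
        have h := Real.log_le_log (by positivity) hlow
        rwa [Real.log_div (Real.exp_ne_zero x) two_ne_zero, Real.log_exp] at h
      have heq : μ - Real.log 2 / (q (m+1) : ℝ)
          = (μ * (q (m+1) : ℝ) - Real.log 2) / (q (m+1) : ℝ) := by
        field_simp
      rw [heq]
      exact div_le_div_of_nonneg_right hlog hqpos.le
    · -- upper squeeze bound
      have hlog : Real.log (q (m+2)) ≤ μ * (q (m+1) : ℝ) + (Real.log 2 + Real.log (q (m+1))) := by
        have h := Real.log_le_log hq2pos hup
        rw [Real.log_mul (by positivity) (ne_of_gt hqpos),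
          Real.log_mul two_ne_zero (Real.exp_ne_zero x), Real.log_exp] at h
        linarith
      have heq : μ + (Real.log 2 + Real.log (q (m+1))) / (q (m+1) : ℝ)
          = (μ * (q (m+1) : ℝ) + (Real.log 2 + Real.log (q (m+1)))) / (q (m+1) : ℝ) := by
        field_simp
      rw [heq]
      exact div_le_div_of_nonneg_right hlog hqpos.le
  have hT : Filter.Tendsto (fun n : ℕ => Real.log (q (n + 1)) / (q n : ℝ)) Filter.atTop
      (nhds μ) :=
    tendsto_of_tendsto_of_tendsto_of_le_of_le' hliml hlimu
      (hev.mono fun n h => h.1) (hev.mono fun n h => h.2)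
  exact hT.limsup_eq
end

section
/- Let α be irrational with convergents p_n/q_n and let θ, k_j be as in the paper's construction. If k is an integer with k_j < |k| ≤ k_{j+1}, |k| ≥ 10⁻³ η q_{2j+1}, and k ≠ k_{j+1}, then ‖2θ + kα‖_{ℝ/ℤ} ≥ ‖q_{2j}α‖_{ℝ/ℤ} − ‖2θ + k_{j+1}α‖_{ℝ/ℤ} ≥ 1/(2 q_{2j+1}) − 10η/q_{2j+2} ≥ 1/(4 q_{2j+1}). -/
lemma round_nearest (x : ℝ) (m : ℤ) : |x - round x| ≤ |x - (m : ℝ)| := by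
  rw [abs_sub_round_eq_min]
  rcases le_or_gt (m : ℝ) (⌊x⌋ : ℝ) with h | h
  · have h1 : Int.fract x ≤ x - m := by
      have := Int.fract_add_floor x
      rw [Int.fract]; linarith
    calc min (Int.fract x) (1 - Int.fract x) ≤ Int.fract x := min_le_left _ _
      _ ≤ x - m := h1
      _ ≤ |x - (m : ℝ)| := le_abs_self _
  · have hm : (⌊x⌋ : ℝ) + 1 ≤ (m : ℝ) := by exact_mod_cast Int.add_one_le_iff.mpr (by exact_mod_cast h)
    have h1 : 1 - Int.fract x ≤ (m : ℝ) - x := by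
      rw [Int.fract]; linarith
    calc min (Int.fract x) (1 - Int.fract x) ≤ 1 - Int.fract x := min_le_right _ _
      _ ≤ (m : ℝ) - x := h1
      _ ≤ |x - (m : ℝ)| := by rw [abs_sub_comm]; exact le_abs_self _

lemma normZ_neg_le (x : ℝ) : normZ (-x) ≤ normZ x := by
  unfold normZ
  calc |-x - round (-x)| ≤ |-x - ((-round x : ℤ) : ℝ)| := round_nearest _ _
    _ = |x - round x| := by push_cast; rw [← abs_neg]; ring_nf

lemma normZ_neg (x : ℝ) : normZ (-x) = normZ x := by
  refine le_antisymm (normZ_neg_le x) ?_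
  have := normZ_neg_le (-x); rwa [neg_neg] at this

lemma normZ_sub_le (x y : ℝ) : normZ (x - y) ≤ normZ x + normZ y := by
  rw [sub_eq_add_neg]
  calc normZ (x + -y) ≤ normZ x + normZ (-y) := normZ_add_le _ _
    _ = normZ x + normZ y := by rw [normZ_neg]

/-- Case 1 in the computation of δ(α,θ): |k| ≥ 10⁻³ η q_{2j+1}, k ≠ k_{j+1}. -/
theorem stmt19 (α θ η : ℝ) (hα : Irrational α) (h0 : 0 < α) (h1 : α < 1)
    (hη0 : 0 < η) (hη1 : η ≤ 1 / 100) (j : ℕ) (kj kj1 : ℤ)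
    (hkj1pos : 0 < kj1) (hkj1 : (kj1 : ℝ) ≤ 2 * η * (cfQ α (2 * j + 1) : ℝ))
    (hqlow : 1 / (2 * (cfQ α (2 * j + 1) : ℝ)) ≤ normZ ((cfQ α (2 * j) : ℝ) * α))
    (hgap : 10 ^ 17 * (cfQ α (2 * j + 1) : ℝ) ≤ η * (cfQ α (2 * j + 2) : ℝ))
    (hθ : normZ (2 * θ + (kj1 : ℝ) * α) ≤ 10 * η / (cfQ α (2 * j + 2) : ℝ))
    (hbest : ∀ m : ℤ, 1 ≤ |m| → |m| < cfQ α (2 * j + 1) →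
      normZ ((cfQ α (2 * j) : ℝ) * α) ≤ normZ ((m : ℝ) * α))
    (k : ℤ) (hk1 : kj < |k|) (hk2 : |k| ≤ kj1)
    (hk3 : (1 / 10 ^ 3) * η * (cfQ α (2 * j + 1) : ℝ) ≤ (|k| : ℝ)) (hk4 : k ≠ kj1) :
    normZ ((cfQ α (2 * j) : ℝ) * α) - normZ (2 * θ + (kj1 : ℝ) * α)
        ≤ normZ (2 * θ + (k : ℝ) * α)
    ∧ 1 / (2 * (cfQ α (2 * j + 1) : ℝ)) - 10 * η / (cfQ α (2 * j + 2) : ℝ)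
        ≤ normZ ((cfQ α (2 * j) : ℝ) * α) - normZ (2 * θ + (kj1 : ℝ) * α)
    ∧ 1 / (4 * (cfQ α (2 * j + 1) : ℝ))
        ≤ 1 / (2 * (cfQ α (2 * j + 1) : ℝ)) - 10 * η / (cfQ α (2 * j + 2) : ℝ) := by
  set Q0 : ℝ := (cfQ α (2 * j) : ℝ)
  set Q1 : ℝ := (cfQ α (2 * j + 1) : ℝ)
  set Q2 : ℝ := (cfQ α (2 * j + 2) : ℝ)
  have hkj1R : (1 : ℝ) ≤ (kj1 : ℝ) := by exact_mod_cast hkj1pos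
  have hQ1pos : 0 < Q1 := by nlinarith
  have hQ2pos : 0 < Q2 := by nlinarith
  have hQ1ne : Q1 ≠ 0 := ne_of_gt hQ1pos
  -- part 1
  set m : ℤ := k - kj1 with hm
  have hm0 : m ≠ 0 := sub_ne_zero.mpr hk4
  have hm1 : 1 ≤ |m| := Int.one_le_abs hm0
  have hmabsR : (|m| : ℝ) ≤ 2 * (kj1 : ℝ) := by
    have h1 : |m| ≤ |k| + |kj1| := abs_sub k kj1
    have h2 : |kj1| = kj1 := abs_of_pos hkj1pos
    have : |m| ≤ 2 * kj1 := by omega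
    exact_mod_cast this
  have hmlt : |m| < cfQ α (2 * j + 1) := by
    have h : (|m| : ℝ) < Q1 := by nlinarith
    unfold Q1 at h
    exact_mod_cast h
  have hb := hbest m hm1 hmlt
  have htri : normZ ((m : ℝ) * α) ≤ normZ (2 * θ + (k : ℝ) * α) + normZ (2 * θ + (kj1 : ℝ) * α) := by
    have heq : (m : ℝ) * α = (2 * θ + (k : ℝ) * α) - (2 * θ + (kj1 : ℝ) * α) := by
      push_cast [hm]; ring
    rw [heq]
    exact normZ_sub_le _ _
  have part1 : normZ (Q0 * α) - normZ (2 * θ + (kj1 : ℝ) * α) ≤ normZ (2 * θ + (k : ℝ) * α) := by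
    linarith
  -- part 2
  have part2 : 1 / (2 * Q1) - 10 * η / Q2 ≤ normZ (Q0 * α) - normZ (2 * θ + (kj1 : ℝ) * α) := by
    linarith
  -- part 3
  have h3 : 10 * η / Q2 ≤ 1 / (4 * Q1) := by
    rw [div_le_div_iff₀ hQ2pos (by positivity)]
    nlinarith
  have heq : 1 / (2 * Q1) - 1 / (4 * Q1) = 1 / (4 * Q1) := by
    field_simp
    ring
  exact ⟨part1, part2, by linarith⟩
end
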